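/- arXiv:1801.09090 — 2 statements merged into one kernel-verified Lean document; each statement's English description precedes it below -/
import Mathlib

section
/- Let λ be a partition. Then for every integer n ≥ 0, ch_n(λ) = Σ_{k+l = n+1, k,l ≥ 0} (B_k(1/2)/k!) · (P_l(λ)/l!), where B_k is the k-th Bernoulli polynomial. Explicitly: (1/n!) Σ_{s∈λ} c(s)^n = Σ_{k+l=n+1} (B_k(1/2)/k!) · (1/l!) Σ_{j=1}^{r} ( (a_j+1/2)^l − (−b_j−1/2)^l ). -/
/-- The Frobenius rank of a partition `μ` (0-indexed): the number of indices `i`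
with `i < μ i`. -/
noncomputable def frobeniusRank (μ : ℕ → ℕ) : ℕ := Nat.card {i : ℕ | i < μ i}

/-- The `j`-th part (0-indexed) of the conjugate partition of `μ`:
`μ' j = #{i : μ i > j}`. -/
noncomputable def conjugatePart (μ : ℕ → ℕ) (j : ℕ) : ℕ := Nat.card {i : ℕ | j < μ i}

open PowerSeries Polynomial Finset

lemma bern_conv (m : ℕ) (x y : ℚ) :
    ∑ p ∈ Finset.HasAntidiagonal.antidiagonal m,
      ((Polynomial.bernoulli p.1).eval x / p.1.factorial) * (y ^ p.2 / p.2.factorial) =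
    (Polynomial.bernoulli m).eval (x + y) / m.factorial := by
  have gen : ∀ t : ℚ, (mk fun n => (Polynomial.bernoulli n).eval t / n.factorial) * (exp ℚ - 1)
      = PowerSeries.X * rescale t (exp ℚ) := by
    intro t
    have := Polynomial.bernoulli_generating_function (A := ℚ) t
    convert this using 3 with n
    simp [aeval_def, eval₂_eq_eval_map, div_eq_inv_mul]
  have hne : (exp ℚ - 1) ≠ 0 := by
    intro h
    have := congrArg (PowerSeries.coeff (R := ℚ) 1) h
    simp [coeff_exp] at this
  have key : (mk fun n => (Polynomial.bernoulli n).eval x / n.factorial) * rescale y (exp ℚ)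
      = mk fun n => (Polynomial.bernoulli n).eval (x + y) / n.factorial := by
    apply mul_right_cancel₀ hne
    rw [mul_assoc, mul_comm (rescale y (exp ℚ)), ← mul_assoc, gen, gen, mul_assoc,
      exp_mul_exp_eq_exp_add]
  have := congrArg (PowerSeries.coeff (R := ℚ) m) key
  rw [PowerSeries.coeff_mul] at this
  simp only [coeff_mk, coeff_rescale, coeff_exp, Algebra.algebraMap_self, RingHom.id_apply] at this
  rw [← this]
  apply Finset.sum_congr rfl
  intro p _
  ring

noncomputable def HH (n : ℕ) (u : ℚ) : ℚ :=
  ∑ p ∈ Finset.HasAntidiagonal.antidiagonal (n + 1),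
    ((Polynomial.bernoulli p.1).eval (1/2) / p.1.factorial) * ((u - 1/2) ^ p.2 / p.2.factorial)

lemma HH_eq (n : ℕ) (u : ℚ) :
    HH n u = (Polynomial.bernoulli (n+1)).eval u / (n+1).factorial := by
  rw [HH, bern_conv]; ring_nf

lemma HH_step (n : ℕ) (u : ℚ) : HH n (u + 1) - HH n u = u ^ n / n.factorial := by
  rw [HH_eq, HH_eq]
  have h := Polynomial.bernoulli_eval_one_add (n+1) u
  rw [add_comm (1:ℚ) u] at h
  simp only [Nat.add_sub_cancel] at h
  rw [h, Nat.factorial_succ]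
  have h2 : ((n+1).factorial : ℚ) ≠ 0 := by positivity
  field_simp
  push_cast; ring


lemma card_char (P : ℕ → Prop) (N : ℕ) (hb : ∀ i, P i → i < N)
    (hdc : ∀ i j, j ≤ i → P i → P j) (i : ℕ) : P i ↔ i < Nat.card {i : ℕ | P i} := by
  classical
  have hset : {i : ℕ | P i} = ↑((Finset.range N).filter P) := by
    ext x; simp only [Set.mem_setOf_eq, coe_filter, mem_range]
    exact ⟨fun h => ⟨hb x h, h⟩, fun h => h.2⟩
  rw [hset, Nat.card_coe_set_eq, Set.ncard_coe_finset]
  set F := (Finset.range N).filter P with hF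
  have hmem : ∀ x, x ∈ F ↔ P x := by
    intro x; simp only [hF, mem_filter, mem_range]
    exact ⟨fun h => h.2, fun h => ⟨hb x h, h⟩⟩
  constructor
  · intro h
    have : Finset.range (i+1) ⊆ F := by
      intro k hk
      rw [hmem]
      exact hdc i k (Nat.lt_succ_iff.mp (mem_range.mp hk)) h
    have := Finset.card_le_card this
    simpa using this
  · intro h
    by_contra hP
    have : F ⊆ Finset.range i := by
      intro k hk
      rw [mem_range]
      by_contra hk2
      exact hP (hdc k i (le_of_not_gt hk2) ((hmem k).mp hk))
    have := Finset.card_le_card this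
    simp at this
    omega

lemma conj_iff {μ : ℕ → ℕ} (hμ : Antitone μ) {N : ℕ} (hfin : ∀ i, N ≤ i → μ i = 0)
    (i j : ℕ) : i < conjugatePart μ j ↔ j < μ i := by
  rw [conjugatePart]
  refine (card_char (fun i => j < μ i) N ?_ ?_ i).symm
  · intro i hi
    by_contra h
    rw [hfin i (le_of_not_gt h)] at hi; omega
  · intro a b hba ha
    exact lt_of_lt_of_le ha (hμ hba)

lemma rank_iff {μ : ℕ → ℕ} (hμ : Antitone μ) {N : ℕ} (hfin : ∀ i, N ≤ i → μ i = 0)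
    (i : ℕ) : i < frobeniusRank μ ↔ i < μ i := by
  rw [frobeniusRank]
  refine (card_char (fun i => i < μ i) N ?_ ?_ i).symm
  · intro i hi
    by_contra h
    rw [hfin i (le_of_not_gt h)] at hi; omega
  · intro a b hba ha
    exact lt_of_le_of_lt hba (lt_of_lt_of_le ha (hμ hba))

lemma nat_eq_of_lt_iff {a b : ℕ} (h : ∀ i, i < a ↔ i < b) : a = b := by
  have h1 := h a; have h2 := h b; omega


lemma key (n N : ℕ) : ∀ s : ℕ, ∀ μ : ℕ → ℕ, Antitone μ → (∀ i, N ≤ i → μ i = 0) →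
    (∑ i ∈ Finset.range N, μ i = s) →
    ∑ i ∈ Finset.range N, ∑ j ∈ Finset.range (μ i), ((j:ℚ) - i)^n / n.factorial
    = ∑ j ∈ Finset.range (frobeniusRank μ),
        (HH n ((μ j : ℚ) - j) - HH n ((j:ℚ) + 1 - conjugatePart μ j)) := by
  intro s
  induction s using Nat.strong_induction_on with
  | _ s IH =>
  intro μ hμ hfin hsum
  rcases Nat.eq_zero_or_pos s with hs | hs
  · -- base case : μ = 0
    subst hs
    have hz : ∀ i, μ i = 0 := by
      intro i
      rcases lt_or_ge i N with h | h
      · exact Finset.sum_eq_zero_iff.mp hsum i (mem_range.mpr h)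
      · exact hfin i h
    have hr : frobeniusRank μ = 0 := by
      by_contra h
      have := (rank_iff hμ hfin 0).mp (Nat.pos_of_ne_zero h)
      rw [hz 0] at this; omega
    simp [hz, hr]
  · -- inductive step
    have hex : ∃ i, i < N ∧ μ i ≠ 0 := by
      by_contra h
      push_neg at h
      have : ∑ i ∈ Finset.range N, μ i = 0 :=
        Finset.sum_eq_zero fun i hi => h i (mem_range.mp hi)
      omega
    obtain ⟨iw, hiwN, hiw⟩ := hex
    set i0 := Nat.findGreatest (fun i => μ i ≠ 0) N with hi0def
    have hP : μ i0 ≠ 0 := Nat.findGreatest_spec (P := fun i => μ i ≠ 0) (le_of_lt hiwN) hiw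
    have hi0le : i0 ≤ N := Nat.findGreatest_le N
    have hi0N : i0 < N := by
      rcases Nat.lt_or_ge i0 N with h | h
      · exact h
      · exfalso; exact hP (hfin i0 h)
    have htop : ∀ i, i0 < i → μ i = 0 := by
      intro i hi
      rcases le_or_gt i N with h | h
      · by_contra hc
        exact Nat.findGreatest_is_greatest hi h hc
      · exact hfin i (le_of_lt h)
    set m := μ i0 with hmdef
    have hm : 1 ≤ m := Nat.pos_of_ne_zero hP
    set ν := Function.update μ i0 (m - 1) with hνdef
    have hν : ∀ i, i ≠ i0 → ν i = μ i := fun i h => Function.update_of_ne h _ _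
    have hνi0 : ν i0 = m - 1 := Function.update_self _ _ _
    have hmle : ∀ i, i ≤ i0 → m ≤ μ i := fun i h => hμ h
    have hν_anti : Antitone ν := by
      intro a b hab
      rcases eq_or_ne a i0 with ha | ha <;> rcases eq_or_ne b i0 with hb | hb
      · subst ha; subst hb; exact le_refl _
      · subst ha
        have hb' : i0 < b := lt_of_le_of_ne hab (Ne.symm hb)
        rw [hν b hb, htop b hb']; omega
      · subst hb
        rw [hν a ha, hνi0]
        have := hmle a hab; omega
      · rw [hν a ha, hν b hb]; exact hμ hab
    have hν_fin : ∀ i, N ≤ i → ν i = 0 := by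
      intro i hi
      rw [hν i (by omega), hfin i hi]
    have hν_sum : ∑ i ∈ Finset.range N, ν i = s - 1 := by
      rw [hνdef, Finset.sum_update_of_mem (mem_range.mpr hi0N)]
      have h2 := Finset.add_sum_erase (Finset.range N) μ (mem_range.mpr hi0N)
      rw [Finset.sdiff_singleton_eq_erase]
      omega
    have IHν := IH (s-1) (by omega) ν hν_anti hν_fin hν_sum
    -- characterizations
    have hrμ := rank_iff hμ hfin
    have hrν := rank_iff hν_anti hν_fin
    have hcμ := conj_iff hμ hfin
    have hcν := conj_iff hν_anti hν_fin
    -- conjugate values at column m-1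
    have hconjm : conjugatePart μ (m-1) = i0 + 1 := by
      apply nat_eq_of_lt_iff
      intro i
      rw [hcμ i (m-1)]
      constructor
      · intro h
        by_contra hc
        rw [htop i (by omega)] at h; omega
      · intro h
        have := hmle i (by omega); omega
    have hconjνm : conjugatePart ν (m-1) = i0 := by
      apply nat_eq_of_lt_iff
      intro i
      rw [hcν i (m-1)]
      constructor
      · intro h
        by_contra hc
        rcases eq_or_ne i i0 with h1 | h1
        · rw [h1, hνi0] at h; omega
        · rw [hν i h1, htop i (by omega)] at h; omega
      · intro h
        rw [hν i (by omega)]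
        have := hmle i (by omega); omega
    have hconjeq : ∀ j, j ≠ m-1 → conjugatePart ν j = conjugatePart μ j := by
      intro j hj
      apply nat_eq_of_lt_iff
      intro i
      rw [hcν i j, hcμ i j]
      rcases eq_or_ne i i0 with h1 | h1
      · rw [h1, hνi0, ← hmdef]; omega
      · rw [hν i h1]
    -- LHS difference
    have hc1 : ((m-1:ℕ):ℚ) = (m:ℚ) - 1 := by push_cast [hm]; ring
    have hL : ∑ i ∈ Finset.range N, ∑ j ∈ Finset.range (μ i), ((j:ℚ) - i)^n / n.factorial
        = (∑ i ∈ Finset.range N, ∑ j ∈ Finset.range (ν i), ((j:ℚ) - i)^n / n.factorial)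
          + ((m:ℚ) - 1 - i0)^n / n.factorial := by
      rw [← sub_eq_iff_eq_add', ← Finset.sum_sub_distrib]
      rw [Finset.sum_eq_single i0]
      · rw [hνi0]
        have hsplit : ∑ j ∈ Finset.range m, ((j:ℚ) - i0)^n / n.factorial
            = (∑ j ∈ Finset.range (m-1), ((j:ℚ) - i0)^n / n.factorial)
              + (((m-1:ℕ):ℚ) - i0)^n / n.factorial := by
          conv_lhs => rw [show m = (m-1)+1 from by omega]
          rw [Finset.sum_range_succ]
        rw [hsplit, hc1]
        ring
      · intro i _ hi
        rw [hν i hi]; ring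
      · intro h
        exact absurd (mem_range.mpr hi0N) h
    rw [hL, IHν]
    have hrμ' : ¬ (i0 < frobeniusRank μ) ∨ True := Or.inr trivial
    rcases lt_trichotomy m (i0+1) with hcase | hcase | hcase
    · -- Case A : m ≤ i0
      have hmi0 : m ≤ i0 := by omega
      have hrr : frobeniusRank ν = frobeniusRank μ := by
        apply nat_eq_of_lt_iff
        intro i
        rw [hrν i, hrμ i]
        rcases eq_or_ne i i0 with h1 | h1
        · subst h1; rw [hνi0, ← hmdef]; omega
        · rw [hν i h1]
      rw [hrr]
      have hdiff : ∑ j ∈ Finset.range (frobeniusRank μ),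
          ((HH n ((μ j : ℚ) - j) - HH n ((j:ℚ) + 1 - conjugatePart μ j))
            - (HH n ((ν j : ℚ) - j) - HH n ((j:ℚ) + 1 - conjugatePart ν j)))
          = ((m:ℚ) - 1 - i0)^n / n.factorial := by
        rw [Finset.sum_eq_single (m-1)]
        · rw [hν (m-1) (by omega), hconjm, hconjνm]
          have e1 : ((m-1:ℕ):ℚ) + 1 - ((i0+1:ℕ):ℚ) = (m:ℚ) - 1 - i0 := by
            push_cast [hm]; ring
          have e2 : ((m-1:ℕ):ℚ) + 1 - (i0:ℚ) = ((m:ℚ) - 1 - i0) + 1 := by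
            push_cast [hm]; ring
          rw [e1, e2]
          linear_combination HH_step n ((m:ℚ) - 1 - i0)
        · intro b hb hbne
          have hb' : b < frobeniusRank μ := mem_range.mp hb
          have hbμ : b < μ b := (hrμ b).mp hb'
          have hbi0 : b ≠ i0 := by
            intro h; rw [h] at hbμ; omega
          rw [hν b hbi0, hconjeq b hbne]; ring
        · intro h
          exfalso
          apply h
          rw [mem_range, hrμ (m-1)]
          have := hmle (m-1) (by omega); omega
      rw [Finset.sum_sub_distrib] at hdiff
      linarith [hdiff]
    · -- Case B2 : m = i0 + 1 (diagonal box)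
      have hr1 : frobeniusRank μ = i0 + 1 := by
        apply nat_eq_of_lt_iff
        intro i
        rw [hrμ i]
        constructor
        · intro h; by_contra hc; rw [htop i (by omega)] at h; omega
        · intro h; have := hmle i (by omega); omega
      have hr2 : frobeniusRank ν = i0 := by
        apply nat_eq_of_lt_iff
        intro i
        rw [hrν i]
        rcases eq_or_ne i i0 with h1 | h1
        · subst h1; rw [hνi0]; omega
        · rw [hν i h1]
          constructor
          · intro h; by_contra hc
            rw [htop i (by omega)] at h; omega
          · intro h; have := hmle i (by omega); omega
      rw [hr1, hr2, Finset.sum_range_succ]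
      have hci0 := hconjm
      rw [show m - 1 = i0 from by omega] at hci0
      have hsame : ∑ j ∈ Finset.range i0,
            (HH n ((ν j : ℚ) - j) - HH n ((j:ℚ) + 1 - conjugatePart ν j))
          = ∑ j ∈ Finset.range i0,
            (HH n ((μ j : ℚ) - j) - HH n ((j:ℚ) + 1 - conjugatePart μ j)) := by
        apply Finset.sum_congr rfl
        intro j hj
        have hj' : j < i0 := mem_range.mp hj
        rw [hν j (by omega), hconjeq j (by omega)]
      have hterm : HH n ((μ i0 : ℚ) - i0) - HH n ((i0:ℚ) + 1 - conjugatePart μ i0)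
          = ((m:ℚ) - 1 - i0)^n / n.factorial := by
        rw [hci0, ← hmdef]
        have hmq : (m:ℚ) = (i0:ℚ) + 1 := by exact_mod_cast congrArg (Nat.cast (R := ℚ)) hcase
        have e1 : (i0:ℚ) + 1 - ((i0+1:ℕ):ℚ) = (m:ℚ) - 1 - i0 := by
          push_cast; rw [hmq]; ring
        have e2 : (m:ℚ) - (i0:ℚ) = ((m:ℚ) - 1 - i0) + 1 := by ring
        rw [e1, e2]
        linear_combination HH_step n ((m:ℚ) - 1 - i0)
      rw [hsame, hterm]
    · -- Case B1 : i0 + 2 ≤ m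
      have hrr : frobeniusRank ν = frobeniusRank μ := by
        apply nat_eq_of_lt_iff
        intro i
        rw [hrν i, hrμ i]
        rcases eq_or_ne i i0 with h1 | h1
        · subst h1; rw [hνi0, ← hmdef]; omega
        · rw [hν i h1]
      rw [hrr]
      have hrle : ¬ (m - 1 < frobeniusRank μ) := by
        rw [hrμ (m-1), htop (m-1) (by omega)]; omega
      have hdiff : ∑ j ∈ Finset.range (frobeniusRank μ),
          ((HH n ((μ j : ℚ) - j) - HH n ((j:ℚ) + 1 - conjugatePart μ j))
            - (HH n ((ν j : ℚ) - j) - HH n ((j:ℚ) + 1 - conjugatePart ν j)))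
          = ((m:ℚ) - 1 - i0)^n / n.factorial := by
        rw [Finset.sum_eq_single i0]
        · rw [hνi0, hconjeq i0 (by omega), ← hmdef]
          have e1 : ((m-1:ℕ):ℚ) - (i0:ℚ) = (m:ℚ) - 1 - i0 := by
            push_cast [hm]; ring
          have e2 : (m:ℚ) - (i0:ℚ) = ((m:ℚ) - 1 - i0) + 1 := by ring
          rw [e1, e2]
          linear_combination HH_step n ((m:ℚ) - 1 - i0)
        · intro b hb hbne
          have hb' : b < frobeniusRank μ := mem_range.mp hb
          rw [hν b hbne, hconjeq b (by omega)]; ring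
        · intro h
          exfalso
          apply h
          rw [mem_range, hrμ i0, ← hmdef]; omega
      rw [Finset.sum_sub_distrib] at hdiff
      linarith [hdiff]


/-- For a partition `μ` and every integer `n ≥ 0`:
`ch_n(μ) = Σ_{k+l=n+1} (B_k(1/2)/k!) (P_l(μ)/l!)`, i.e. explicitly
`(1/n!) Σ_{s∈μ} c(s)^n = Σ_{k+l=n+1} (B_k(1/2)/k!) (1/l!) Σ_{j=1}^r ((a_j+1/2)^l - (-b_j-1/2)^l)`,
where `B_k` is the `k`-th Bernoulli polynomial, boxes of row `i` (0-indexed) are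
`(i,j)` with `j < μ i` and content `j - i`, and in the 0-indexed convention
`a_j + 1/2 = μ j - j - 1/2`, `-b_j - 1/2 = -(μ' j - j - 1/2)`. -/
theorem stmt_5 (μ : ℕ → ℕ) (hμ : Antitone μ) (hfin : ∃ N, ∀ i, N ≤ i → μ i = 0)
    (n : ℕ) :
    (1 / (n.factorial : ℚ)) *
        ∑' i : ℕ, ∑ j ∈ Finset.range (μ i), ((j : ℚ) - (i : ℚ)) ^ n =
      ∑ p ∈ Finset.HasAntidiagonal.antidiagonal (n + 1),
        ((Polynomial.bernoulli p.1).eval (1 / 2 : ℚ) / (p.1.factorial : ℚ)) *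
          ((1 / (p.2.factorial : ℚ)) *
            ∑ j ∈ Finset.range (frobeniusRank μ),
              (((μ j : ℚ) - (j : ℚ) - 1 / 2) ^ p.2 -
                (-((conjugatePart μ j : ℚ) - (j : ℚ) - 1 / 2)) ^ p.2)) := by
  obtain ⟨N, hN⟩ := hfin
  have htsum : ∑' i : ℕ, ∑ j ∈ Finset.range (μ i), ((j : ℚ) - (i : ℚ)) ^ n
      = ∑ i ∈ Finset.range N, ∑ j ∈ Finset.range (μ i), ((j : ℚ) - (i : ℚ)) ^ n := by
    apply tsum_eq_sum
    intro b hb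
    rw [hN b (le_of_not_gt (fun h => hb (mem_range.mpr h)))]
    simp
  rw [htsum]
  have hL : (1 / (n.factorial : ℚ)) *
        ∑ i ∈ Finset.range N, ∑ j ∈ Finset.range (μ i), ((j : ℚ) - (i : ℚ)) ^ n
      = ∑ i ∈ Finset.range N, ∑ j ∈ Finset.range (μ i), ((j : ℚ) - i) ^ n / n.factorial := by
    rw [Finset.mul_sum]
    refine Finset.sum_congr rfl fun i _ => ?_
    rw [Finset.mul_sum]
    refine Finset.sum_congr rfl fun j _ => ?_
    ring
  rw [hL, key n N (∑ i ∈ Finset.range N, μ i) μ hμ hN rfl]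
  calc ∑ j ∈ Finset.range (frobeniusRank μ),
        (HH n ((μ j : ℚ) - j) - HH n ((j:ℚ) + 1 - conjugatePart μ j))
      = ∑ j ∈ Finset.range (frobeniusRank μ), ∑ p ∈ Finset.HasAntidiagonal.antidiagonal (n + 1),
          (((Polynomial.bernoulli p.1).eval (1 / 2 : ℚ) / (p.1.factorial : ℚ)) *
              ((((μ j : ℚ) - (j : ℚ) - 1 / 2) ^ p.2) / p.2.factorial)
            - ((Polynomial.bernoulli p.1).eval (1 / 2 : ℚ) / (p.1.factorial : ℚ)) *
              (((-((conjugatePart μ j : ℚ) - (j : ℚ) - 1 / 2)) ^ p.2) / p.2.factorial)) := by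
        refine Finset.sum_congr rfl fun j _ => ?_
        rw [HH, HH, ← Finset.sum_sub_distrib]
        refine Finset.sum_congr rfl fun p _ => ?_
        have e1 : ((μ j : ℚ) - (j:ℚ)) - 1/2 = (μ j : ℚ) - (j : ℚ) - 1 / 2 := by ring
        have e2 : ((j:ℚ) + 1 - (conjugatePart μ j : ℚ)) - 1/2
            = -((conjugatePart μ j : ℚ) - (j : ℚ) - 1 / 2) := by ring
        rw [e1, e2]
    _ = ∑ p ∈ Finset.HasAntidiagonal.antidiagonal (n + 1), ∑ j ∈ Finset.range (frobeniusRank μ),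
          (((Polynomial.bernoulli p.1).eval (1 / 2 : ℚ) / (p.1.factorial : ℚ)) *
              ((((μ j : ℚ) - (j : ℚ) - 1 / 2) ^ p.2) / p.2.factorial)
            - ((Polynomial.bernoulli p.1).eval (1 / 2 : ℚ) / (p.1.factorial : ℚ)) *
              (((-((conjugatePart μ j : ℚ) - (j : ℚ) - 1 / 2)) ^ p.2) / p.2.factorial)) :=
        Finset.sum_comm
    _ = ∑ p ∈ Finset.HasAntidiagonal.antidiagonal (n + 1),
        ((Polynomial.bernoulli p.1).eval (1 / 2 : ℚ) / (p.1.factorial : ℚ)) *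
          ((1 / (p.2.factorial : ℚ)) *
            ∑ j ∈ Finset.range (frobeniusRank μ),
              (((μ j : ℚ) - (j : ℚ) - 1 / 2) ^ p.2 -
                (-((conjugatePart μ j : ℚ) - (j : ℚ) - 1 / 2)) ^ p.2)) := by
        refine Finset.sum_congr rfl fun p _ => ?_
        rw [Finset.mul_sum, Finset.mul_sum]
        refine Finset.sum_congr rfl fun j _ => ?_
        ring
end

section
/- (Bloch–Okounkov one-point function) Let q and t be real numbers with 0 < q < 1 and 1 < t < 1/q. Then all series below converge absolutely and ( ∏_{n≥1} (1 − q^n) ) · Σ_{λ∈𝒫} q^{|λ|} Σ_{i=1}^∞ t^{λ_i − i + 1/2} = 1/θ(t), where θ(t) = ( ∏_{n≥1} (1 − q^n) )^{−2} · ( t^{1/2} − t^{−1/2} ) · ∏_{n≥1} (1 − q^n t)(1 − q^n t^{−1}). -/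
/-- A partition: a nonincreasing sequence of nonnegative integers (0-indexed)
with only finitely many nonzero terms. -/
structure IntPartition where
  parts : ℕ → ℕ
  antitone' : Antitone parts
  finite_support' : ∃ N, ∀ i, N ≤ i → parts i = 0

/-- The weight `|λ| = Σ_i λ_i` of a partition. -/
noncomputable def IntPartition.wt (lam : IntPartition) : ℕ := ∑' i : ℕ, lam.parts i




open Real Filter Finset
set_option maxHeartbeats 1000000

section Helpers

variable {q : ℝ}

lemma inv_one_sub_le_exp {x b : ℝ} (hx : 0 ≤ x) (hxb : x ≤ b) (hb : b < 1) :
    (1 - x)⁻¹ ≤ Real.exp (x / (1 - b)) := by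
  have hb0 : (0:ℝ) < 1 - b := by linarith
  have hx1 : (0:ℝ) < 1 - x := by linarith
  have key : (1:ℝ) ≤ (1 + x / (1 - b)) * (1 - x) := by
    have h2 : 1 + x / (1 - b) = ((1 - b) + x) / (1 - b) := by field_simp
    rw [h2, div_mul_eq_mul_div, le_div_iff₀ hb0]
    nlinarith
  have h3 : (1 - x)⁻¹ ≤ 1 + x / (1 - b) := by
    rw [inv_le_iff_one_le_mul₀' hx1] at *
    · linarith [key]
  refine h3.trans ?_
  have := Real.add_one_le_exp (x / (1 - b))
  linarith

lemma neg_log_one_sub_le {x b : ℝ} (hx : 0 ≤ x) (hxb : x ≤ b) (hb : b < 1) :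
    |Real.log (1 - x)| ≤ x / (1 - b) := by
  have hx1 : (0:ℝ) < 1 - x := by linarith
  have h1 : Real.log (1 - x) ≤ 0 := Real.log_nonpos (by linarith) (by linarith)
  have h2 : -Real.log (1 - x) ≤ x / (1 - b) := by
    have : Real.log (1 - x)⁻¹ ≤ Real.log (Real.exp (x / (1 - b))) :=
      Real.log_le_log (by positivity) (inv_one_sub_le_exp hx hxb hb)
    rwa [Real.log_inv, Real.log_exp] at this
  rw [abs_of_nonpos h1]
  exact h2

lemma summable_log_one_sub (hq0 : 0 < q) (hq1 : q < 1) {c : ℝ} (hc : 0 ≤ c) (hc1 : c < 1) :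
    Summable fun j : ℕ => Real.log (1 - c * q ^ j) := by
  refine Summable.of_abs ?_
  refine Summable.of_nonneg_of_le (fun j => abs_nonneg _)
    (fun j => ?_) (((summable_geometric_of_lt_one hq0.le hq1).mul_left (c / (1 - c))))
  have h1 : 0 ≤ c * q ^ j := by positivity
  have h2 : c * q ^ j ≤ c := by
    calc c * q ^ j ≤ c * 1 := by
          refine mul_le_mul_of_nonneg_left ?_ hc
          exact pow_le_one₀ hq0.le hq1.le
      _ = c := mul_one c
  calc |Real.log (1 - c * q ^ j)| ≤ (c * q ^ j) / (1 - c) :=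
        neg_log_one_sub_le h1 h2 hc1
    _ = c / (1 - c) * q ^ j := by ring

lemma hasProd_one_sub (hq0 : 0 < q) (hq1 : q < 1) {c : ℝ} (hc : 0 ≤ c) (hc1 : c < 1) :
    HasProd (fun j : ℕ => 1 - c * q ^ j)
      (Real.exp (∑' j : ℕ, Real.log (1 - c * q ^ j))) := by
  have hpos : ∀ j : ℕ, 0 < 1 - c * q ^ j := by
    intro j
    have h2 : c * q ^ j ≤ c := by
      calc c * q ^ j ≤ c * 1 :=
            mul_le_mul_of_nonneg_left (pow_le_one₀ hq0.le hq1.le) hc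
        _ = c := mul_one c
    linarith
  have h := ((summable_log_one_sub hq0 hq1 hc hc1).hasSum).rexp
  refine h.congr_fun fun j => ?_
  simp [Function.comp, Real.exp_log (hpos j)]

lemma multipliable_one_sub (hq0 : 0 < q) (hq1 : q < 1) {c : ℝ} (hc : 0 ≤ c) (hc1 : c < 1) :
    Multipliable fun j : ℕ => 1 - c * q ^ j :=
  ⟨_, hasProd_one_sub hq0 hq1 hc hc1⟩

lemma tprod_one_sub_eq (hq0 : 0 < q) (hq1 : q < 1) {c : ℝ} (hc : 0 ≤ c) (hc1 : c < 1) :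
    (∏' j : ℕ, (1 - c * q ^ j)) = Real.exp (∑' j : ℕ, Real.log (1 - c * q ^ j)) :=
  (hasProd_one_sub hq0 hq1 hc hc1).tprod_eq

lemma tprod_one_sub_pos (hq0 : 0 < q) (hq1 : q < 1) {c : ℝ} (hc : 0 ≤ c) (hc1 : c < 1) :
    0 < ∏' j : ℕ, (1 - c * q ^ j) := by
  rw [tprod_one_sub_eq hq0 hq1 hc hc1]; exact Real.exp_pos _

lemma tprod_one_sub_shift (hq0 : 0 < q) (hq1 : q < 1) {c : ℝ} (hc : 0 ≤ c) (hc1 : c < 1)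
    (k : ℕ) :
    (∏' j : ℕ, (1 - c * q ^ j)) =
      (∏ j ∈ range k, (1 - c * q ^ j)) * ∏' j : ℕ, (1 - (c * q ^ k) * q ^ j) := by
  have hck : 0 ≤ c * q ^ k := by positivity
  have hck1 : c * q ^ k < 1 := by
    have : c * q ^ k ≤ c * 1 := mul_le_mul_of_nonneg_left (pow_le_one₀ hq0.le hq1.le) hc
    linarith
  rw [tprod_one_sub_eq hq0 hq1 hc hc1, tprod_one_sub_eq hq0 hq1 hck hck1]
  have hsum := summable_log_one_sub hq0 hq1 hc hc1
  rw [← Summable.sum_add_tsum_nat_add k hsum, Real.exp_add, Real.exp_sum]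
  congr 1
  · refine Finset.prod_congr rfl fun j _ => ?_
    rw [Real.exp_log]
    have h2 : c * q ^ j ≤ c :=
      (mul_le_mul_of_nonneg_left (pow_le_one₀ hq0.le hq1.le) hc).trans_eq (mul_one c)
    linarith
  · congr 1
    refine tsum_congr fun j => ?_
    congr 1
    ring

end Helpers

section QBinom
variable {q a z : ℝ}

/-- `qc q a k = ∏_{j<k} (1 - a q^j)/(1 - q^{j+1})`. -/
noncomputable def qc (q a : ℝ) : ℕ → ℝ :=
  fun k => ∏ j ∈ range k, ((1 - a * q ^ j) / (1 - q ^ (j + 1)))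

lemma qc_zero : qc q a 0 = 1 := by simp [qc]

lemma qc_succ (k : ℕ) : qc q a (k + 1) = qc q a k * ((1 - a * q ^ k) / (1 - q ^ (k + 1))) := by
  simp only [qc, Finset.prod_range_succ]

lemma qc_rec (hq1 : q < 1) (hq0 : 0 < q) (k : ℕ) :
    qc q a (k + 1) * (1 - q ^ (k + 1)) = qc q a k * (1 - a * q ^ k) := by
  have h : (1:ℝ) - q ^ (k+1) ≠ 0 := by
    have : q ^ (k+1) < 1 := pow_lt_one₀ hq0.le hq1 (Nat.succ_ne_zero k)
    linarith
  rw [qc_succ]; field_simp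

lemma aux_aq (hq0 : 0 < q) (hq1 : q < 1) (ha : 0 ≤ a) (ha1 : a < 1) (j : ℕ) :
    0 ≤ a * q ^ j ∧ a * q ^ j < 1 := by
  constructor
  · positivity
  · have : a * q ^ j ≤ a * 1 := mul_le_mul_of_nonneg_left (pow_le_one₀ hq0.le hq1.le) ha
    linarith

lemma qc_nonneg (hq0 : 0 < q) (hq1 : q < 1) (ha : 0 ≤ a) (ha1 : a < 1) (k : ℕ) :
    0 ≤ qc q a k := by
  refine Finset.prod_nonneg fun j _ => ?_
  obtain ⟨h1, h2⟩ := aux_aq hq0 hq1 ha ha1 j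
  have h3 : q ^ (j+1) < 1 := pow_lt_one₀ hq0.le hq1 (Nat.succ_ne_zero j)
  exact div_nonneg (by linarith) (by linarith)

/-- Uniform bound for `qc`. -/
noncomputable def qcBound (q : ℝ) : ℝ := Real.exp (q / ((1 - q) * (1 - q)))

lemma qcBound_pos : 0 < qcBound q := Real.exp_pos _

lemma qc_le (hq0 : 0 < q) (hq1 : q < 1) (ha : 0 ≤ a) (ha1 : a < 1) (k : ℕ) :
    qc q a k ≤ qcBound q := by
  have step : ∀ j ∈ range k, (1 - a * q ^ j) / (1 - q ^ (j + 1)) ≤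
      Real.exp (q ^ (j+1) / (1 - q)) := by
    intro j _
    have h2 : q ^ (j+1) < 1 := pow_lt_one₀ hq0.le hq1 (Nat.succ_ne_zero j)
    have h2' : (0:ℝ) < 1 - q ^ (j+1) := by linarith
    obtain ⟨ha0, ha1'⟩ := aux_aq hq0 hq1 ha ha1 j
    have hle : (1 - a * q ^ j) / (1 - q ^ (j + 1)) ≤ (1 - q ^ (j+1))⁻¹ := by
      rw [div_le_iff₀ h2']
      have hc : (1 - q^(j+1))⁻¹ * (1 - q^(j+1)) = 1 := inv_mul_cancel₀ h2'.ne'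
      rw [hc]
      linarith
    refine hle.trans ?_
    have hqj : q ^ (j+1) ≤ q := by
      calc q ^ (j+1) = q * q ^ j := by ring
        _ ≤ q * 1 := mul_le_mul_of_nonneg_left (pow_le_one₀ hq0.le hq1.le) hq0.le
        _ = q := mul_one q
    exact inv_one_sub_le_exp (by positivity) hqj hq1
  calc qc q a k ≤ ∏ j ∈ range k, Real.exp (q ^ (j+1) / (1 - q)) := by
        refine Finset.prod_le_prod (fun j _ => ?_) step
        obtain ⟨h1, h2⟩ := aux_aq hq0 hq1 ha ha1 j
        have h3 : q ^ (j+1) < 1 := pow_lt_one₀ hq0.le hq1 (Nat.succ_ne_zero j)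
        exact div_nonneg (by linarith) (by linarith)
    _ = Real.exp (∑ j ∈ range k, q ^ (j+1) / (1 - q)) := (Real.exp_sum _ _).symm
    _ ≤ qcBound q := by
        rw [qcBound, Real.exp_le_exp]
        have hge : ∑ j ∈ range k, q ^ (j+1) / (1 - q) =
            (∑ j ∈ range k, q ^ j) * (q / (1 - q)) := by
          rw [Finset.sum_mul]
          refine Finset.sum_congr rfl fun j _ => ?_
          rw [pow_succ, mul_div_assoc]
        rw [hge]
        have hsum : ∑ j ∈ range k, q ^ j ≤ (1 - q)⁻¹ := by
          have := Summable.sum_le_tsum (range k) (fun j _ => by positivity : ∀ j ∉ range k, (0:ℝ) ≤ q ^ j)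
            (summable_geometric_of_lt_one hq0.le hq1)
          rwa [tsum_geometric_of_lt_one hq0.le hq1] at this
        have hq1' : (0:ℝ) < 1 - q := by linarith
        calc (∑ j ∈ range k, q ^ j) * (q / (1 - q)) ≤ (1 - q)⁻¹ * (q / (1 - q)) :=
              mul_le_mul_of_nonneg_right hsum (by positivity)
          _ = q / ((1 - q) * (1 - q)) := by field_simp

/-- The q-hypergeometric-type series `F(a; z) = Σ_k qc q a k z^k`. -/
noncomputable def Fqb (q a z : ℝ) : ℝ := ∑' k : ℕ, qc q a k * z ^ k

lemma summable_qb (hq0 : 0 < q) (hq1 : q < 1) (ha : 0 ≤ a) (ha1 : a < 1)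
    (hz : 0 ≤ z) (hz1 : z < 1) : Summable fun k : ℕ => qc q a k * z ^ k := by
  refine Summable.of_nonneg_of_le
    (fun k => mul_nonneg (qc_nonneg hq0 hq1 ha ha1 k) (pow_nonneg hz k)) ?_
    ((summable_geometric_of_lt_one hz hz1).mul_left (qcBound q))
  intro k
  exact mul_le_mul_of_nonneg_right (qc_le hq0 hq1 ha ha1 k) (by positivity)

lemma Fqb_funeq (hq0 : 0 < q) (hq1 : q < 1) (ha : 0 ≤ a) (ha1 : a < 1)
    (hz : 0 ≤ z) (hz1 : z < 1) :
    (1 - z) * Fqb q a z = (1 - a * z) * Fqb q a (q * z) := by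
  have hqz : 0 ≤ q * z := by positivity
  have hqz1 : q * z < 1 := by nlinarith
  have h1 : HasSum (fun k : ℕ => qc q a k * z ^ k) (Fqb q a z) :=
    (summable_qb hq0 hq1 ha ha1 hz hz1).hasSum
  have h2 : HasSum (fun k : ℕ => qc q a k * (q * z) ^ k) (Fqb q a (q * z)) :=
    (summable_qb hq0 hq1 ha ha1 hqz hqz1).hasSum
  set S := Fqb q a z
  set T := Fqb q a (q * z)
  have h3 : HasSum (fun k : ℕ => qc q a k * (1 - q ^ k) * z ^ k) (S - T) := by
    refine (h1.sub h2).congr_fun fun k => ?_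
    rw [mul_pow]
    ring
  have h4 : HasSum (fun k : ℕ => qc q a (k+1) * (1 - q ^ (k+1)) * z ^ (k+1)) (S - T) := by
    have := (hasSum_nat_add_iff' (f := fun k : ℕ => qc q a k * (1 - q ^ k) * z ^ k) 1).mpr h3
    simpa using this
  have h5 : HasSum (fun k : ℕ => qc q a k * (1 - a * q ^ k) * z ^ (k+1)) (S - T) :=
    h4.congr_fun fun k => by rw [qc_rec hq1 hq0 k]
  have h6 : HasSum (fun k : ℕ => qc q a k * (1 - a * q ^ k) * z ^ (k+1))
      (S * z - T * (a * z)) := by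
    have h7 : HasSum (fun k : ℕ => qc q a k * z ^ k * z) (S * z) := h1.mul_right z
    have h8 : HasSum (fun k : ℕ => qc q a k * (q * z) ^ k * (a * z)) (T * (a * z)) :=
      h2.mul_right (a * z)
    refine (h7.sub h8).congr_fun fun k => ?_
    rw [mul_pow]
    ring
  have h9 := h5.unique h6
  linear_combination h9

lemma Fqb_ge_one (hq0 : 0 < q) (hq1 : q < 1) (ha : 0 ≤ a) (ha1 : a < 1)
    (hz : 0 ≤ z) (hz1 : z < 1) : 1 ≤ Fqb q a z := by
  have h := Summable.le_tsum (summable_qb hq0 hq1 ha ha1 hz hz1) 0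
    (fun j _ => mul_nonneg (qc_nonneg hq0 hq1 ha ha1 j) (pow_nonneg hz j))
  simpa [qc_zero, Fqb] using h

lemma Fqb_le (hq0 : 0 < q) (hq1 : q < 1) (ha : 0 ≤ a) (ha1 : a < 1)
    (hz : 0 ≤ z) (hz1 : z < 1) : Fqb q a z ≤ 1 + qcBound q * z * (1 - z)⁻¹ := by
  have hsum := summable_qb hq0 hq1 ha ha1 hz hz1
  rw [Fqb, Summable.tsum_eq_zero_add hsum, qc_zero]
  simp only [pow_zero, mul_one]
  gcongr 1 + ?_
  have hb : Summable (fun k : ℕ => qcBound q * z * z ^ k) :=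
    (summable_geometric_of_lt_one hz hz1).mul_left _
  calc (∑' k : ℕ, qc q a (k+1) * z ^ (k+1)) ≤ ∑' k : ℕ, qcBound q * z * z ^ k := by
        refine Summable.tsum_le_tsum (fun k => ?_) ((summable_nat_add_iff 1).mpr hsum) hb
        have := qc_le hq0 hq1 ha ha1 (k+1)
        have h0 := qc_nonneg hq0 hq1 ha ha1 (k+1)
        calc qc q a (k+1) * z ^ (k+1) ≤ qcBound q * z ^ (k+1) :=
              mul_le_mul_of_nonneg_right this (pow_nonneg hz _)
          _ = qcBound q * z * z ^ k := by ring
    _ = qcBound q * z * (1-z)⁻¹ := by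
        rw [tsum_mul_left, tsum_geometric_of_lt_one hz hz1]

end QBinom


section QBinom2
variable {q a z : ℝ}

lemma Fqb_tendsto_one (hq0 : 0 < q) (hq1 : q < 1) (ha : 0 ≤ a) (ha1 : a < 1)
    (hz : 0 ≤ z) (hz1 : z < 1) :
    Filter.Tendsto (fun n : ℕ => Fqb q a (q ^ n * z)) Filter.atTop (nhds 1) := by
  have hw : Filter.Tendsto (fun n : ℕ => q ^ n * z) Filter.atTop (nhds 0) := by
    have := (tendsto_pow_atTop_nhds_zero_of_lt_one hq0.le hq1).mul_const z
    simpa using this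
  have hwn : ∀ n : ℕ, 0 ≤ q ^ n * z := fun n => by positivity
  have hwl : ∀ n : ℕ, q ^ n * z < 1 := by
    intro n
    have : q ^ n * z ≤ 1 * z := mul_le_mul_of_nonneg_right (pow_le_one₀ hq0.le hq1.le) hz
    linarith
  have h1 : Filter.Tendsto (fun n : ℕ => (1 - q ^ n * z)⁻¹) Filter.atTop (nhds 1) := by
    have := (tendsto_const_nhds (x := (1:ℝ)).sub hw).inv₀ (by norm_num)
    simpa using this
  have hupper : Filter.Tendsto (fun n : ℕ => 1 + qcBound q * (q ^ n * z) * (1 - q ^ n * z)⁻¹)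
      Filter.atTop (nhds 1) := by
    have h2 : Filter.Tendsto (fun n : ℕ => qcBound q * (q ^ n * z) * (1 - q ^ n * z)⁻¹)
        Filter.atTop (nhds 0) := by
      have := ((hw.const_mul (qcBound q)).mul h1)
      simpa using this
    have := tendsto_const_nhds (x := (1:ℝ)).add h2
    simpa using this
  refine tendsto_of_tendsto_of_tendsto_of_le_of_le (tendsto_const_nhds) hupper
    (fun n => Fqb_ge_one hq0 hq1 ha ha1 (hwn n) (hwl n))
    (fun n => Fqb_le hq0 hq1 ha ha1 (hwn n) (hwl n))

lemma Fqb_iterate (hq0 : 0 < q) (hq1 : q < 1) (ha : 0 ≤ a) (ha1 : a < 1)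
    (hz : 0 ≤ z) (hz1 : z < 1) (n : ℕ) :
    Fqb q a z * ∏ j ∈ Finset.range n, (1 - z * q ^ j) =
      (∏ j ∈ Finset.range n, (1 - a * z * q ^ j)) * Fqb q a (q ^ n * z) := by
  induction n with
  | zero => simp
  | succ n ih =>
    have hzn : 0 ≤ q ^ n * z := by positivity
    have hzn1 : q ^ n * z < 1 := by
      have : q ^ n * z ≤ 1 * z := mul_le_mul_of_nonneg_right (pow_le_one₀ hq0.le hq1.le) hz
      linarith
    have hfe := Fqb_funeq hq0 hq1 ha ha1 hzn hzn1
    have hpow : q * (q ^ n * z) = q ^ (n+1) * z := by ring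
    rw [hpow] at hfe
    rw [Finset.prod_range_succ, Finset.prod_range_succ, ← mul_assoc, ih]
    linear_combination (∏ j ∈ Finset.range n, (1 - a * z * q ^ j)) * hfe +
      (Fqb q a (q ^ n * z) * (∏ j ∈ Finset.range n, (1 - a * z * q ^ j))) *
        (by ring : z * q ^ n - q ^ n * z = 0)

theorem qbinom (hq0 : 0 < q) (hq1 : q < 1) (ha : 0 ≤ a) (ha1 : a < 1)
    (hz : 0 ≤ z) (hz1 : z < 1) :
    Fqb q a z * (∏' j : ℕ, (1 - z * q ^ j)) = ∏' j : ℕ, (1 - (a * z) * q ^ j) := by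
  have haz : 0 ≤ a * z := mul_nonneg ha hz
  have haz1 : a * z < 1 := by nlinarith
  have hL : Filter.Tendsto (fun n : ℕ => Fqb q a z * ∏ j ∈ Finset.range n, (1 - z * q ^ j))
      Filter.atTop (nhds (Fqb q a z * ∏' j : ℕ, (1 - z * q ^ j))) :=
    ((multipliable_one_sub hq0 hq1 hz hz1).hasProd.tendsto_prod_nat).const_mul _
  have hR : Filter.Tendsto
      (fun n : ℕ => (∏ j ∈ Finset.range n, (1 - (a * z) * q ^ j)) * Fqb q a (q ^ n * z))
      Filter.atTop (nhds ((∏' j : ℕ, (1 - (a * z) * q ^ j)) * 1)) :=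
    ((multipliable_one_sub hq0 hq1 haz haz1).hasProd.tendsto_prod_nat).mul
      (Fqb_tendsto_one hq0 hq1 ha ha1 hz hz1)
  have heq : (fun n : ℕ => Fqb q a z * ∏ j ∈ Finset.range n, (1 - z * q ^ j)) =
      fun n : ℕ => (∏ j ∈ Finset.range n, (1 - (a * z) * q ^ j)) * Fqb q a (q ^ n * z) := by
    funext n
    have := Fqb_iterate hq0 hq1 ha ha1 hz hz1 n
    simpa [mul_assoc] using this
  rw [heq] at hL
  have := tendsto_nhds_unique hL hR
  simpa using this

end QBinom2


namespace IntPartition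

@[ext] lemma ext {a b : IntPartition} (h : a.parts = b.parts) : a = b := by
  cases a; cases b; simpa using h

lemma wt_eq_sum (lam : IntPartition) {N : ℕ} (hN : ∀ i, N ≤ i → lam.parts i = 0) :
    lam.wt = ∑ i ∈ Finset.range N, lam.parts i := by
  rw [IntPartition.wt]
  refine tsum_eq_sum (fun i hi => hN i ?_)
  simpa using hi

/-- The empty partition. -/
def emptyP : IntPartition := ⟨fun _ => 0, fun _ _ _ => le_refl 0, ⟨0, fun _ _ => rfl⟩⟩

@[simp] lemma emptyP_parts (i : ℕ) : emptyP.parts i = 0 := rfl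

@[simp] lemma wt_emptyP : emptyP.wt = 0 := by
  rw [wt_eq_sum emptyP (N := 0) (fun i _ => rfl)]
  simp

lemma eq_emptyP {lam : IntPartition} (h : lam.parts 0 = 0) : lam = emptyP := by
  ext i
  have := lam.antitone' (Nat.zero_le i)
  simp only [h] at this
  simpa [emptyP] using Nat.le_zero.mp this

lemma parts_zero_of_le {lam : IntPartition} {k i : ℕ} (h : lam.parts k = 0) (hki : k ≤ i) :
    lam.parts i = 0 := Nat.le_zero.mp (h ▸ lam.antitone' hki)

/-- Partitions with at most `k` (nonzero) parts. -/
def Bdd (k : ℕ) := {mu : IntPartition // mu.parts k = 0}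

/-- Partitions with all parts at most `m`. -/
def Cap (m : ℕ) := {nu : IntPartition // nu.parts 0 ≤ m}

instance : Unique (Bdd 0) where
  default := ⟨emptyP, rfl⟩
  uniq := fun ⟨lam, h⟩ => Subtype.ext (eq_emptyP h)

instance : Unique (Cap 0) where
  default := ⟨emptyP, le_refl 0⟩
  uniq := fun ⟨lam, h⟩ => Subtype.ext (eq_emptyP (Nat.le_zero.mp h))

/-- Glue: first `k+1` parts are `μ_i + c`, then the parts of `ν` (all `≤ c`). -/
def glue (k c : ℕ) (mu : IntPartition) (nu : IntPartition) (hmu : mu.parts k = 0)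
    (hnu : nu.parts 0 ≤ c) : IntPartition where
  parts := fun i => if i ≤ k then mu.parts i + c else nu.parts (i - (k+1))
  antitone' := by
    refine antitone_nat_of_succ_le fun i => ?_
    by_cases h1 : i + 1 ≤ k
    · simp only [if_pos h1, if_pos (Nat.le_of_succ_le h1)]
      exact Nat.add_le_add_right (mu.antitone' (Nat.le_succ i)) c
    · by_cases h2 : i ≤ k
      · have hik : i = k := by omega
        subst hik
        simp only [if_neg h1, if_pos h2, hmu, Nat.zero_add, Nat.sub_self]
        exact hnu
      · simp only [if_neg h1, if_neg h2]
        have harith : i + 1 - (k+1) = (i - (k+1)) + 1 := by omega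
        rw [harith]
        exact nu.antitone' (Nat.le_succ _)
  finite_support' := by
    obtain ⟨N, hN⟩ := nu.finite_support'
    refine ⟨k + 1 + N, fun i hi => ?_⟩
    simp only [if_neg (by omega : ¬ i ≤ k)]
    exact hN _ (by omega)

@[simp] lemma glue_parts (k c : ℕ) (mu nu : IntPartition) (hmu : mu.parts k = 0)
    (hnu : nu.parts 0 ≤ c) (i : ℕ) :
    (glue k c mu nu hmu hnu).parts i =
      if i ≤ k then mu.parts i + c else nu.parts (i - (k+1)) := rfl

lemma glue_wt (k c : ℕ) (mu nu : IntPartition) (hmu : mu.parts k = 0)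
    (hnu : nu.parts 0 ≤ c) :
    (glue k c mu nu hmu hnu).wt = (k+1) * c + mu.wt + nu.wt := by
  obtain ⟨N, hN⟩ := nu.finite_support'
  rw [wt_eq_sum (glue k c mu nu hmu hnu) (N := (k+1) + N)
    (fun i hi => by
      rw [glue_parts, if_neg (by omega : ¬ i ≤ k)]
      exact hN _ (by omega)),
    wt_eq_sum mu (N := k+1) (fun i hi => parts_zero_of_le hmu (by omega)),
    wt_eq_sum nu hN, Finset.sum_range_add]
  have h1 : ∀ x ∈ Finset.range (k+1),
      (glue k c mu nu hmu hnu).parts x = mu.parts x + c := by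
    intro x hx
    rw [glue_parts, if_pos (by simp at hx; omega : x ≤ k)]
  have h2 : ∀ x ∈ Finset.range N,
      (glue k c mu nu hmu hnu).parts (k + 1 + x) = nu.parts x := by
    intro x hx
    rw [glue_parts, if_neg (by omega : ¬ k + 1 + x ≤ k)]
    congr 1
    omega
  rw [Finset.sum_congr rfl h1, Finset.sum_congr rfl h2, Finset.sum_add_distrib]
  simp [Finset.sum_const, Finset.card_range]
  ring

/-! ### The decomposition map for fixed `k` -/

/-- The gluing map `(m, μ, ν) ↦ λ` with `λ_i = μ_i + m` for `i ≤ k` and tail `ν`. -/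
def decompFun (k : ℕ) (x : Σ m : ℕ, Bdd k × Cap m) : IntPartition :=
  glue k x.1 x.2.1.1 x.2.2.1 x.2.1.2 x.2.2.2

lemma decompFun_bijective (k : ℕ) : Function.Bijective (decompFun k) := by
  constructor
  · rintro ⟨m, ⟨⟨mu, hmu⟩, ⟨nu, hnu⟩⟩⟩ ⟨m', ⟨⟨mu', hmu'⟩, ⟨nu', hnu'⟩⟩⟩ h
    have hp : ∀ i, (glue k m mu nu hmu hnu).parts i = (glue k m' mu' nu' hmu' hnu').parts i :=
      fun i => congrArg (fun lam => parts lam i) h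
    have hmm : m = m' := by
      have := hp k
      simp only [glue_parts, if_pos (le_refl k), hmu, hmu'] at this
      omega
    subst hmm
    have hmu_eq : mu = mu' := by
      ext i
      by_cases hik : i ≤ k
      · have := hp i
        simp only [glue_parts, if_pos hik] at this
        omega
      · rw [parts_zero_of_le hmu (by omega), parts_zero_of_le hmu' (by omega)]
    have hnu_eq : nu = nu' := by
      ext i
      have := hp (k + 1 + i)
      simp only [glue_parts, if_neg (by omega : ¬ k + 1 + i ≤ k)] at this
      simpa [(by omega : k + 1 + i - (k+1) = i)] using this
    subst hmu_eq; subst hnu_eq; rfl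
  · intro lam
    refine ⟨⟨lam.parts k,
      ⟨⟨⟨fun i => lam.parts i - lam.parts k,
          fun i j hij => Nat.sub_le_sub_right (lam.antitone' hij) _,
          by obtain ⟨N, hN⟩ := lam.finite_support'
             exact ⟨N, fun i hi => by simp [hN i hi]⟩⟩,
        Nat.sub_self _⟩,
       ⟨⟨fun i => lam.parts (k + 1 + i),
          fun i j hij => lam.antitone' (by omega),
          by obtain ⟨N, hN⟩ := lam.finite_support'
             exact ⟨N, fun i hi => hN _ (by omega)⟩⟩,
        lam.antitone' (by omega : k ≤ k + 1 + 0)⟩⟩⟩, ?_⟩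
    ext i
    simp only [decompFun, glue_parts]
    by_cases h : i ≤ k
    · simp only [if_pos h]
      have : lam.parts k ≤ lam.parts i := lam.antitone' h
      omega
    · simp only [if_neg h]
      congr 1
      omega

/-- `decompEquiv k` as an equivalence. -/
noncomputable def decompEquiv (k : ℕ) : (Σ m : ℕ, Bdd k × Cap m) ≃ IntPartition :=
  Equiv.ofBijective _ (decompFun_bijective k)

@[simp] lemma decompEquiv_apply (k : ℕ) (x : Σ m : ℕ, Bdd k × Cap m) :
    decompEquiv k x = decompFun k x := rfl

lemma decompFun_wt (k : ℕ) (x : Σ m : ℕ, Bdd k × Cap m) :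
    (decompFun k x).wt = (k+1) * x.1 + x.2.1.1.wt + x.2.2.1.wt := glue_wt _ _ _ _ _ _

lemma decompFun_parts_k (k : ℕ) (x : Σ m : ℕ, Bdd k × Cap m) :
    (decompFun k x).parts k = x.1 := by
  simp only [decompFun, glue_parts, if_pos (le_refl k), x.2.1.2, Nat.zero_add]

/-! ### The recursion map for `Bdd` -/

def bddFun (k : ℕ) (x : ℕ × Bdd k) : Bdd (k+1) :=
  ⟨glue k x.1 x.2.1 emptyP x.2.2 (Nat.zero_le _),
    by show (if k + 1 ≤ k then _ else _) = 0; rw [if_neg (by omega : ¬ k + 1 ≤ k)]; rfl⟩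

lemma bddFun_wt (k : ℕ) (x : ℕ × Bdd k) :
    (bddFun k x).1.wt = (k+1) * x.1 + x.2.1.wt := by
  have := glue_wt k x.1 x.2.1 emptyP x.2.2 (Nat.zero_le _)
  simpa [bddFun] using this

lemma bddFun_bijective (k : ℕ) : Function.Bijective (bddFun k) := by
  constructor
  · rintro ⟨c, ⟨mu, hmu⟩⟩ ⟨c', ⟨mu', hmu'⟩⟩ h
    have hp : ∀ i, (bddFun k (c, ⟨mu, hmu⟩)).1.parts i =
        (bddFun k (c', ⟨mu', hmu'⟩)).1.parts i :=
      fun i => congrArg (fun lam => parts lam.1 i) h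
    have hcc : c = c' := by
      have := hp k
      simp only [bddFun, glue_parts, glue, if_pos (le_refl k), hmu, hmu'] at this
      omega
    subst hcc
    have hmu_eq : mu = mu' := by
      ext i
      by_cases hik : i ≤ k
      · have := hp i
        simp only [bddFun, glue_parts, glue, if_pos hik] at this
        omega
      · rw [parts_zero_of_le hmu (by omega), parts_zero_of_le hmu' (by omega)]
    subst hmu_eq; rfl
  · rintro ⟨mu, hmu⟩
    refine ⟨⟨mu.parts k,
      ⟨⟨fun i => mu.parts i - mu.parts k,
          fun i j hij => Nat.sub_le_sub_right (mu.antitone' hij) _,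
          by obtain ⟨N, hN⟩ := mu.finite_support'
             exact ⟨N, fun i hi => by simp [hN i hi]⟩⟩,
        Nat.sub_self _⟩⟩, ?_⟩
    refine Subtype.ext ?_
    ext i
    simp only [bddFun, glue_parts, glue]
    by_cases h : i ≤ k
    · simp only [if_pos h]
      have : mu.parts k ≤ mu.parts i := mu.antitone' h
      omega
    · simp only [if_neg h, emptyP_parts]
      exact (parts_zero_of_le hmu (by omega)).symm

/-! ### The recursion map for `Cap` -/

def capFunAux (m : ℕ) (x : ℕ × Cap m) : IntPartition where
  parts := fun i => if i < x.1 then m + 1 else x.2.1.parts (i - x.1)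
  antitone' := by
    refine antitone_nat_of_succ_le fun i => ?_
    by_cases h1 : i + 1 < x.1
    · simp [if_pos h1, if_pos (by omega : i < x.1)]
    · by_cases h2 : i < x.1
      · simp only [if_neg h1, if_pos h2]
        have : i + 1 - x.1 = 0 := by omega
        rw [this]
        have := x.2.2
        omega
      · simp only [if_neg h1, if_neg h2]
        have harith : i + 1 - x.1 = (i - x.1) + 1 := by omega
        rw [harith]
        exact x.2.1.antitone' (Nat.le_succ _)
  finite_support' := by
    obtain ⟨N, hN⟩ := x.2.1.finite_support'
    refine ⟨x.1 + N, fun i hi => ?_⟩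
    simp only [if_neg (by omega : ¬ i < x.1)]
    exact hN _ (by omega)

def capFun (m : ℕ) (x : ℕ × Cap m) : Cap (m+1) :=
  ⟨capFunAux m x, by
    simp only [capFunAux]
    by_cases h : 0 < x.1
    · simp [if_pos h]
    · have h0 : x.1 = 0 := by omega
      simp only [h0, if_neg (lt_irrefl 0), Nat.sub_zero]
      have := x.2.2
      omega⟩

@[simp] lemma capFun_parts (m : ℕ) (x : ℕ × Cap m) (i : ℕ) :
    (capFun m x).1.parts i = if i < x.1 then m + 1 else x.2.1.parts (i - x.1) := rfl

lemma capFun_wt (m : ℕ) (x : ℕ × Cap m) :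
    (capFun m x).1.wt = (m+1) * x.1 + x.2.1.wt := by
  obtain ⟨N, hN⟩ := x.2.1.finite_support'
  rw [wt_eq_sum (capFun m x).1 (N := x.1 + N)
    (fun i hi => by
      rw [capFun_parts, if_neg (by omega : ¬ i < x.1)]
      exact hN _ (by omega)),
    wt_eq_sum x.2.1 hN, Finset.sum_range_add]
  have h1 : ∀ j ∈ Finset.range x.1, (capFun m x).1.parts j = m + 1 := by
    intro j hj
    rw [capFun_parts, if_pos (by simp at hj; omega : j < x.1)]
  have h2 : ∀ j ∈ Finset.range N, (capFun m x).1.parts (x.1 + j) = x.2.1.parts j := by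
    intro j hj
    rw [capFun_parts, if_neg (by omega : ¬ x.1 + j < x.1)]
    congr 1
    omega
  rw [Finset.sum_congr rfl h1, Finset.sum_congr rfl h2]
  simp [Finset.sum_const, Finset.card_range]
  ring

lemma capFun_bijective (m : ℕ) : Function.Bijective (capFun m) := by
  constructor
  · rintro ⟨c, ⟨nu, hnu⟩⟩ ⟨c', ⟨nu', hnu'⟩⟩ h
    have hp : ∀ i, (capFun m (c, ⟨nu, hnu⟩)).1.parts i =
        (capFun m (c', ⟨nu', hnu'⟩)).1.parts i :=
      fun i => congrArg (fun lam => parts lam.1 i) h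
    have hcc : c = c' := by
      by_contra hne
      rcases Nat.lt_or_ge c c' with hlt | hge
      · have := hp c
        simp only [capFun_parts, if_neg (lt_irrefl c), if_pos hlt, Nat.sub_self] at this
        omega
      · have hlt : c' < c := by omega
        have := hp c'
        simp only [capFun_parts, if_neg (lt_irrefl c'), if_pos hlt, Nat.sub_self] at this
        omega
    subst hcc
    have hnu_eq : nu = nu' := by
      ext i
      have := hp (c + i)
      simp only [capFun_parts, if_neg (by omega : ¬ c + i < c)] at this
      simpa [(by omega : c + i - c = i)] using this
    subst hnu_eq; rfl
  · rintro ⟨nu, hnu⟩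
    have hex : ∃ i, nu.parts i ≤ m := by
      obtain ⟨N, hN⟩ := nu.finite_support'
      exact ⟨N, by rw [hN N (le_refl N)]; omega⟩
    set c := Nat.find hex with hc
    have hcspec : nu.parts c ≤ m := Nat.find_spec hex
    refine ⟨⟨c, ⟨⟨fun i => nu.parts (c + i),
        fun i j hij => nu.antitone' (by omega),
        by obtain ⟨N, hN⟩ := nu.finite_support'
           exact ⟨N, fun i hi => hN _ (by omega)⟩⟩,
      by simpa using hcspec⟩⟩, ?_⟩
    refine Subtype.ext ?_
    ext i
    rw [capFun_parts]
    by_cases h : i < c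
    · rw [if_pos h]
      show m + 1 = nu.parts i
      have h1 : ¬ nu.parts i ≤ m := Nat.find_min hex h
      have h2 : nu.parts i ≤ m + 1 := le_trans (nu.antitone' (Nat.zero_le i)) hnu
      omega
    · rw [if_neg h]
      show nu.parts (c + (i - c)) = nu.parts i
      congr 1
      omega

end IntPartition


section PartitionSums
open IntPartition
variable {q : ℝ}

/-- `Pk q k = ∏_{j=1}^k (1-q^j)⁻¹`. -/
noncomputable def Pk (q : ℝ) (k : ℕ) : ℝ := ∏ j ∈ Finset.range k, (1 - q ^ (j+1))⁻¹

lemma qc_zero_eq_Pk (k : ℕ) : qc q 0 k = Pk q k := by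
  refine Finset.prod_congr rfl fun j _ => ?_
  rw [zero_mul, sub_zero, one_div]

lemma Pk_succ (k : ℕ) : Pk q (k+1) = Pk q k * (1 - q ^ (k+1))⁻¹ := Finset.prod_range_succ _ _

lemma Pk_nonneg (hq0 : 0 < q) (hq1 : q < 1) (k : ℕ) : 0 ≤ Pk q k := by
  rw [← qc_zero_eq_Pk]
  exact qc_nonneg hq0 hq1 le_rfl one_pos k

lemma Pk_le (hq0 : 0 < q) (hq1 : q < 1) (k : ℕ) : Pk q k ≤ qcBound q := by
  rw [← qc_zero_eq_Pk]
  exact qc_le hq0 hq1 le_rfl one_pos k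

lemma hasSum_cap (hq0 : 0 < q) (hq1 : q < 1) :
    ∀ m : ℕ, HasSum (fun nu : Cap m => q ^ nu.1.wt) (Pk q m) := by
  intro m
  induction m with
  | zero =>
    have h := hasSum_single (f := fun nu : Cap 0 => q ^ nu.1.wt) default
      (fun b' hb' => absurd (Subsingleton.elim b' default) hb')
    have hd : (default : Cap 0).1.wt = 0 := wt_emptyP
    simpa [hd, Pk] using h
  | succ m ih =>
    have e := Equiv.ofBijective (capFun m) (capFun_bijective m)
    rw [← (Equiv.ofBijective (capFun m) (capFun_bijective m)).hasSum_iff]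
    have hgeom : HasSum (fun c : ℕ => (q ^ (m+1)) ^ c) (1 - q ^ (m+1))⁻¹ :=
      hasSum_geometric_of_lt_one (by positivity) (pow_lt_one₀ hq0.le hq1 (Nat.succ_ne_zero m))
    have hmul : HasSum (fun x : ℕ × Cap m => (q ^ (m+1)) ^ x.1 * q ^ x.2.1.wt)
        ((1 - q ^ (m+1))⁻¹ * Pk q m) := by
      refine hgeom.mul ih ?_
      exact hgeom.summable.mul_of_nonneg ih.summable
        (fun c => by positivity) (fun nu => by positivity)
    have heq : ((fun nu : Cap (m+1) => q ^ nu.1.wt) ∘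
        (Equiv.ofBijective (capFun m) (capFun_bijective m))) =
        fun x : ℕ × Cap m => (q ^ (m+1)) ^ x.1 * q ^ x.2.1.wt := by
      funext x
      simp only [Function.comp_apply, Equiv.ofBijective_apply, capFun_wt]
      rw [pow_add, pow_mul]
    rw [heq]
    rw [Pk_succ, mul_comm]
    exact hmul

lemma hasSum_bdd (hq0 : 0 < q) (hq1 : q < 1) :
    ∀ k : ℕ, HasSum (fun mu : Bdd k => q ^ mu.1.wt) (Pk q k) := by
  intro k
  induction k with
  | zero =>
    have h := hasSum_single (f := fun mu : Bdd 0 => q ^ mu.1.wt) default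
      (fun b' hb' => absurd (Subsingleton.elim b' default) hb')
    have hd : (default : Bdd 0).1.wt = 0 := wt_emptyP
    simpa [hd, Pk] using h
  | succ k ih =>
    rw [← (Equiv.ofBijective (bddFun k) (bddFun_bijective k)).hasSum_iff]
    have hgeom : HasSum (fun c : ℕ => (q ^ (k+1)) ^ c) (1 - q ^ (k+1))⁻¹ :=
      hasSum_geometric_of_lt_one (by positivity) (pow_lt_one₀ hq0.le hq1 (Nat.succ_ne_zero k))
    have hmul : HasSum (fun x : ℕ × Bdd k => (q ^ (k+1)) ^ x.1 * q ^ x.2.1.wt)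
        ((1 - q ^ (k+1))⁻¹ * Pk q k) := by
      refine hgeom.mul ih ?_
      exact hgeom.summable.mul_of_nonneg ih.summable
        (fun c => by positivity) (fun mu => by positivity)
    have heq : ((fun mu : Bdd (k+1) => q ^ mu.1.wt) ∘
        (Equiv.ofBijective (bddFun k) (bddFun_bijective k))) =
        fun x : ℕ × Bdd k => (q ^ (k+1)) ^ x.1 * q ^ x.2.1.wt := by
      funext x
      simp only [Function.comp_apply, Equiv.ofBijective_apply, bddFun_wt]
      rw [pow_add, pow_mul]
    rw [heq]
    rw [Pk_succ, mul_comm]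
    exact hmul

/-- Key decomposition sum: `Σ_λ q^{|λ|} u^{λ_k} = Pk(k) · F(0; q^{k+1} u)`. -/
lemma hasSum_decomp (hq0 : 0 < q) (hq1 : q < 1) (k : ℕ) {u : ℝ} (hu : 0 ≤ u)
    (hqu : q * u < 1) :
    HasSum (fun lam : IntPartition => q ^ lam.wt * u ^ lam.parts k)
      (Pk q k * Fqb q 0 (q ^ (k+1) * u)) := by
  set ξ : ℝ := q ^ (k+1) * u with hξ
  have hξ0 : 0 ≤ ξ := by positivity
  have hξ1 : ξ < 1 := by
    have h1 : q ^ (k+1) * u = q ^ k * (q * u) := by ring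
    have h2 : q ^ k * (q * u) ≤ 1 * (q * u) :=
      mul_le_mul_of_nonneg_right (pow_le_one₀ hq0.le hq1.le) (by positivity)
    rw [hξ, h1]
    nlinarith [pow_nonneg hq0.le k]
  set f : IntPartition → ℝ := fun lam => q ^ lam.wt * u ^ lam.parts k with hf
  set F : (Σ m : ℕ, Bdd k × Cap m) → ℝ := fun x => f (decompFun k x) with hF
  have hFval : ∀ x : (Σ m : ℕ, Bdd k × Cap m),
      F x = ξ ^ x.1 * (q ^ x.2.1.1.wt * q ^ x.2.2.1.wt) := by
    intro x
    simp only [hF, hf, decompFun_wt k x, decompFun_parts_k k x, hξ, mul_pow, ← pow_mul,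
      pow_add]
    ring
  -- summability of F over the sigma type
  have hfib : ∀ m : ℕ, HasSum (fun p : Bdd k × Cap m => ξ ^ m * (q ^ p.1.1.wt * q ^ p.2.1.wt))
      (ξ ^ m * (Pk q k * Pk q m)) := by
    intro m
    refine HasSum.mul_left _ ?_
    refine (hasSum_bdd hq0 hq1 k).mul (hasSum_cap hq0 hq1 m) ?_
    exact (hasSum_bdd hq0 hq1 k).summable.mul_of_nonneg (hasSum_cap hq0 hq1 m).summable
      (fun mu => by positivity) (fun nu => by positivity)
  have hFnonneg : ∀ x, 0 ≤ F x := by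
    intro x
    rw [hFval x]
    positivity
  have houter : Summable (fun m : ℕ => ξ ^ m * (Pk q k * Pk q m)) := by
    refine Summable.of_nonneg_of_le
      (fun m => by
        have := Pk_nonneg hq0 hq1 k
        have := Pk_nonneg hq0 hq1 m
        positivity)
      (fun m => ?_) (((summable_geometric_of_lt_one hξ0 hξ1).mul_left
        (qcBound q * qcBound q)))
    have h1 : Pk q k * Pk q m ≤ qcBound q * qcBound q :=
      mul_le_mul (Pk_le hq0 hq1 k) (Pk_le hq0 hq1 m) (Pk_nonneg hq0 hq1 m)
        (le_of_lt qcBound_pos)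
    calc ξ ^ m * (Pk q k * Pk q m) ≤ ξ ^ m * (qcBound q * qcBound q) :=
          mul_le_mul_of_nonneg_left h1 (by positivity)
      _ = qcBound q * qcBound q * ξ ^ m := by ring
  have hFsummable : Summable F := by
    refine (summable_sigma_of_nonneg hFnonneg).mpr ⟨fun m => ?_, ?_⟩
    · exact ((hfib m).summable).congr (fun p => ((hFval ⟨m, p⟩)).symm)
    · refine houter.congr fun m => ?_
      rw [← (hfib m).tsum_eq]
      exact (tsum_congr fun p => ((hFval ⟨m, p⟩)).symm)
  have hFs : HasSum F (Pk q k * Fqb q 0 ξ) := by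
    have h1 : HasSum F (∑' x, F x) := hFsummable.hasSum
    have h2 : (∑' x, F x) = Pk q k * Fqb q 0 ξ := by
      rw [Summable.tsum_sigma hFsummable]
      have h3 : ∀ m : ℕ, (∑' p : Bdd k × Cap m, F ⟨m, p⟩) = ξ ^ m * (Pk q k * Pk q m) := by
        intro m
        rw [← (hfib m).tsum_eq]
        exact tsum_congr fun p => hFval ⟨m, p⟩
      rw [tsum_congr h3]
      have h4 : ∀ m : ℕ, ξ ^ m * (Pk q k * Pk q m) = Pk q k * (qc q 0 m * ξ ^ m) := by
        intro m
        rw [qc_zero_eq_Pk]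
        ring
      rw [tsum_congr h4, tsum_mul_left]
      rfl
    rwa [h2] at h1
  exact ((decompEquiv k).hasSum_iff).mp hFs

end PartitionSums

section Final
open IntPartition
variable {q t : ℝ}

lemma qc_eq_prod_mul_Pk (a : ℝ) (i : ℕ) :
    qc q a i = (∏ j ∈ Finset.range i, (1 - a * q ^ j)) * Pk q i := by
  rw [qc, Pk, ← Finset.prod_mul_distrib]
  exact Finset.prod_congr rfl fun j _ => div_eq_mul_inv _ _

lemma aux_ratio_mono {z w : ℝ} (hz : 0 ≤ z) (hzw : z ≤ w) (hw : w < 1) :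
    z * (1 - z)⁻¹ ≤ w * (1 - w)⁻¹ := by
  have h1 : (0:ℝ) < 1 - z := by linarith
  have h2 : (0:ℝ) < 1 - w := by linarith
  rw [← div_eq_mul_inv, ← div_eq_mul_inv, div_le_div_iff₀ h1 h2]
  nlinarith

lemma rpow_term (ht0 : 0 < t) (p i : ℕ) :
    t ^ ((p : ℝ) - (i : ℝ) - 1 / 2) = t ^ p * (t⁻¹) ^ i * t ^ (-(1:ℝ)/2) := by
  have h : ((p:ℝ) - (i:ℝ) - 1/2) = (p:ℝ) + ((-(i:ℝ)) + (-(1:ℝ)/2)) := by ring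
  rw [h, Real.rpow_add ht0, Real.rpow_add ht0, Real.rpow_natCast]
  have h2 : t ^ (-(i:ℝ)) = (t⁻¹) ^ i := by
    rw [Real.rpow_neg ht0.le, Real.rpow_natCast, inv_pow]
  rw [h2, mul_assoc]

/-- The value of `Σ_λ q^{|λ|} t^{λ_i - i - 1/2}`. -/
noncomputable def Dterm (q t : ℝ) (i : ℕ) : ℝ :=
  (Pk q i * Fqb q 0 (q ^ (i+1) * t)) * ((t⁻¹) ^ i * t ^ (-(1:ℝ)/2))

section WithHyp
variable (hq0 : 0 < q) (hq1 : q < 1) (ht1 : 1 < t) (ht2 : t < 1 / q)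
include hq0 hq1 ht1 ht2

lemma ht0' : (0:ℝ) < t := lt_trans one_pos ht1

lemma hqt' : q * t < 1 := by
  have := mul_lt_mul_of_pos_left ht2 hq0
  rwa [mul_one_div, div_self hq0.ne'] at this

lemma summable_inner (lam : IntPartition) :
    Summable fun i : ℕ => t ^ ((lam.parts i : ℝ) - (i : ℝ) - 1 / 2) := by
  have ht0 := ht0' hq0 hq1 ht1 ht2
  have hti0 : (0:ℝ) ≤ t⁻¹ := by positivity
  have hti1 : t⁻¹ < 1 := inv_lt_one_of_one_lt₀ ht1
  refine Summable.of_nonneg_of_le (fun i => Real.rpow_nonneg ht0.le _) (fun i => ?_)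
    ((summable_geometric_of_lt_one hti0 hti1).mul_left
      (t ^ lam.parts 0 * t ^ (-(1:ℝ)/2)))
  rw [rpow_term ht0]
  have h1 : t ^ lam.parts i ≤ t ^ lam.parts 0 :=
    pow_le_pow_right₀ ht1.le (lam.antitone' (Nat.zero_le i))
  have h2 : (0:ℝ) < t ^ (-(1:ℝ)/2) := Real.rpow_pos_of_pos ht0 _
  calc t ^ lam.parts i * (t⁻¹) ^ i * t ^ (-(1:ℝ)/2)
      ≤ t ^ lam.parts 0 * (t⁻¹) ^ i * t ^ (-(1:ℝ)/2) := by
        have h4 : (0:ℝ) ≤ (t⁻¹) ^ i := by positivity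
        exact mul_le_mul_of_nonneg_right (mul_le_mul_of_nonneg_right h1 h4) h2.le
    _ = t ^ lam.parts 0 * t ^ (-(1:ℝ)/2) * (t⁻¹) ^ i := by ring

lemma hasSum_G_fiber (i : ℕ) :
    HasSum (fun lam : IntPartition =>
      q ^ lam.wt * t ^ ((lam.parts i : ℝ) - (i : ℝ) - 1 / 2)) (Dterm q t i) := by
  have ht0 := ht0' hq0 hq1 ht1 ht2
  have hqt := hqt' hq0 hq1 ht1 ht2
  have h := (hasSum_decomp hq0 hq1 i (u := t) ht0.le hqt).mul_right
    ((t⁻¹) ^ i * t ^ (-(1:ℝ)/2))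
  refine h.congr_fun fun lam => ?_
  rw [rpow_term ht0]
  ring

lemma Dterm_nonneg (i : ℕ) : 0 ≤ Dterm q t i := by
  have ht0 := ht0' hq0 hq1 ht1 ht2
  have hqt := hqt' hq0 hq1 ht1 ht2
  have hz0 : (0:ℝ) ≤ q ^ (i+1) * t := by positivity
  have hz1 : q ^ (i+1) * t < 1 := by
    have h1 : q ^ (i+1) * t = q ^ i * (q * t) := by ring
    nlinarith [pow_le_one₀ hq0.le hq1.le (n := i), pow_nonneg hq0.le i, mul_pos hq0 ht0]
  have h1 := Fqb_ge_one hq0 hq1 le_rfl one_pos hz0 hz1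
  have h2 := Pk_nonneg hq0 hq1 i
  have h3 : (0:ℝ) < t ^ (-(1:ℝ)/2) := Real.rpow_pos_of_pos ht0 _
  have h4 : (0:ℝ) ≤ (t⁻¹) ^ i := by positivity
  have : (0:ℝ) ≤ Fqb q 0 (q ^ (i+1) * t) := by linarith
  rw [Dterm]
  positivity

lemma summable_D : Summable (Dterm q t) := by
  have ht0 := ht0' hq0 hq1 ht1 ht2
  have hqt := hqt' hq0 hq1 ht1 ht2
  have hti0 : (0:ℝ) ≤ t⁻¹ := by positivity
  have hti1 : t⁻¹ < 1 := inv_lt_one_of_one_lt₀ ht1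
  set C : ℝ := qcBound q * (1 + qcBound q * (q * t) * (1 - q * t)⁻¹) * t ^ (-(1:ℝ)/2) with hC
  refine Summable.of_nonneg_of_le (Dterm_nonneg hq0 hq1 ht1 ht2) (fun i => ?_)
    ((summable_geometric_of_lt_one hti0 hti1).mul_left C)
  have hz0 : (0:ℝ) ≤ q ^ (i+1) * t := by positivity
  have hzqt : q ^ (i+1) * t ≤ q * t := by
    have h1 : q ^ (i+1) * t = q ^ i * (q * t) := by ring
    nlinarith [pow_le_one₀ hq0.le hq1.le (n := i), pow_nonneg hq0.le i, mul_pos hq0 ht0]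
  have hz1 : q ^ (i+1) * t < 1 := lt_of_le_of_lt hzqt hqt
  have hF : Fqb q 0 (q ^ (i+1) * t) ≤ 1 + qcBound q * (q * t) * (1 - q * t)⁻¹ := by
    refine (Fqb_le hq0 hq1 le_rfl one_pos hz0 hz1).trans ?_
    have := aux_ratio_mono hz0 hzqt hqt
    have hb := qcBound_pos (q := q)
    nlinarith
  have hPk := Pk_le hq0 hq1 i
  have hPk0 := Pk_nonneg hq0 hq1 i
  have hF0 : (0:ℝ) ≤ Fqb q 0 (q ^ (i+1) * t) := by
    linarith [Fqb_ge_one hq0 hq1 le_rfl one_pos hz0 hz1]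
  have h3 : (0:ℝ) < t ^ (-(1:ℝ)/2) := Real.rpow_pos_of_pos ht0 _
  have h4 : (0:ℝ) ≤ (t⁻¹) ^ i := by positivity
  have hqb := qcBound_pos (q := q)
  rw [Dterm, hC]
  have hstep : Pk q i * Fqb q 0 (q ^ (i+1) * t) ≤
      qcBound q * (1 + qcBound q * (q * t) * (1 - q * t)⁻¹) := by
    have h5 : (0:ℝ) ≤ 1 + qcBound q * (q * t) * (1 - q * t)⁻¹ := by nlinarith
    calc Pk q i * Fqb q 0 (q ^ (i+1) * t) ≤ qcBound q * Fqb q 0 (q ^ (i+1) * t) :=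
          mul_le_mul_of_nonneg_right hPk hF0
      _ ≤ qcBound q * (1 + qcBound q * (q * t) * (1 - q * t)⁻¹) :=
          mul_le_mul_of_nonneg_left hF hqb.le
  calc (Pk q i * Fqb q 0 (q ^ (i+1) * t)) * ((t⁻¹) ^ i * t ^ (-(1:ℝ)/2))
      ≤ (qcBound q * (1 + qcBound q * (q * t) * (1 - q * t)⁻¹)) *
          ((t⁻¹) ^ i * t ^ (-(1:ℝ)/2)) := by
        refine mul_le_mul_of_nonneg_right hstep (by positivity)
    _ = qcBound q * (1 + qcBound q * (q * t) * (1 - q * t)⁻¹) * t ^ (-(1:ℝ)/2) * (t⁻¹) ^ i := by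
        ring

/-- Summability of the double-indexed family. -/
lemma summable_Gp : Summable (fun p : ℕ × IntPartition =>
    q ^ p.2.wt * t ^ ((p.2.parts p.1 : ℝ) - (p.1 : ℝ) - 1 / 2)) := by
  have ht0 := ht0' hq0 hq1 ht1 ht2
  refine (summable_prod_of_nonneg ?_).mpr ⟨fun i => (hasSum_G_fiber hq0 hq1 ht1 ht2 i).summable,
    ?_⟩
  · intro p
    have h1 : (0:ℝ) ≤ q ^ p.2.wt := by positivity
    exact mul_nonneg h1 (Real.rpow_nonneg ht0.le _)
  · refine (summable_D hq0 hq1 ht1 ht2).congr fun i => ?_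
    exact ((hasSum_G_fiber hq0 hq1 ht1 ht2 i).tsum_eq).symm

lemma summable_outer : Summable (fun lam : IntPartition =>
    q ^ lam.wt * ∑' i : ℕ, t ^ ((lam.parts i : ℝ) - (i : ℝ) - 1 / 2)) := by
  have ht0 := ht0' hq0 hq1 ht1 ht2
  have hswap : Summable (fun p : IntPartition × ℕ =>
      q ^ p.1.wt * t ^ ((p.1.parts p.2 : ℝ) - (p.2 : ℝ) - 1 / 2)) := by
    have h := (Equiv.prodComm IntPartition ℕ).summable_iff.mpr
      (summable_Gp hq0 hq1 ht1 ht2)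
    exact h
  have hnn : ∀ p : IntPartition × ℕ,
      0 ≤ q ^ p.1.wt * t ^ ((p.1.parts p.2 : ℝ) - (p.2 : ℝ) - 1 / 2) := by
    intro p
    have h1 : (0:ℝ) ≤ q ^ p.1.wt := by positivity
    exact mul_nonneg h1 (Real.rpow_nonneg ht0.le _)
  have h2 := ((summable_prod_of_nonneg hnn).mp hswap).2
  refine h2.congr fun lam => ?_
  have h3 : ∀ y : ℕ, q ^ (lam, y).1.wt *
      t ^ (((lam, y).1.parts (lam, y).2 : ℝ) - ((lam, y).2 : ℝ) - 1 / 2) =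
      q ^ lam.wt * t ^ ((lam.parts y : ℝ) - (y : ℝ) - 1 / 2) := fun y => rfl
  rw [tsum_congr h3, tsum_mul_left]

lemma tsum_eq_tsum_D :
    (∑' lam : IntPartition,
      q ^ lam.wt * ∑' i : ℕ, t ^ ((lam.parts i : ℝ) - (i : ℝ) - 1 / 2)) =
      ∑' i : ℕ, Dterm q t i := by
  have hGp := summable_Gp hq0 hq1 ht1 ht2
  have h1 : (∑' lam : IntPartition,
      q ^ lam.wt * ∑' i : ℕ, t ^ ((lam.parts i : ℝ) - (i : ℝ) - 1 / 2)) =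
      ∑' (lam : IntPartition) (i : ℕ),
        q ^ lam.wt * t ^ ((lam.parts i : ℝ) - (i : ℝ) - 1 / 2) := by
    refine tsum_congr fun lam => ?_
    rw [tsum_mul_left]
  rw [h1]
  have h2 : ∑' (lam : IntPartition) (i : ℕ),
      q ^ lam.wt * t ^ ((lam.parts i : ℝ) - (i : ℝ) - 1 / 2) =
      ∑' (i : ℕ) (lam : IntPartition),
        q ^ lam.wt * t ^ ((lam.parts i : ℝ) - (i : ℝ) - 1 / 2) := by
    refine Summable.tsum_comm' hGp ?_ ?_
    · intro i
      exact (hasSum_G_fiber hq0 hq1 ht1 ht2 i).summable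
    · intro lam
      exact (summable_inner hq0 hq1 ht1 ht2 lam).mul_left _
  rw [h2]
  exact tsum_congr fun i => (hasSum_G_fiber hq0 hq1 ht1 ht2 i).tsum_eq

end WithHyp
end Final

section Final2
open IntPartition
variable {q t : ℝ}

lemma Fqb0_eq (hq0 : 0 < q) (hq1 : q < 1) {z : ℝ} (hz0 : 0 ≤ z) (hz1 : z < 1) :
    Fqb q 0 z = (∏' j : ℕ, (1 - z * q ^ j))⁻¹ := by
  have h := qbinom hq0 hq1 le_rfl one_pos hz0 hz1
  have h2 : (∏' j : ℕ, (1 - (0 * z) * q ^ j)) = 1 := by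
    have : (fun j : ℕ => 1 - (0 * z) * q ^ j) = fun _ : ℕ => (1:ℝ) := by
      funext j; ring
    rw [this, tprod_one]
  rw [h2] at h
  have hne : (∏' j : ℕ, (1 - z * q ^ j)) ≠ 0 := (tprod_one_sub_pos hq0 hq1 hz0 hz1).ne'
  rw [inv_eq_one_div, eq_div_iff hne]
  exact h

section WithHyp2
variable (hq0 : 0 < q) (hq1 : q < 1) (ht1 : 1 < t) (ht2 : t < 1 / q)
include hq0 hq1 ht1 ht2

lemma tsum_D_eval :
    ∑' i : ℕ, Dterm q t i =
      t ^ (-(1:ℝ)/2) * (∏' j : ℕ, (1 - (q * t) * q ^ j))⁻¹ * Fqb q (q * t) t⁻¹ := by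
  have ht0 := ht0' hq0 hq1 ht1 ht2
  have hqt := hqt' hq0 hq1 ht1 ht2
  have hqt0 : (0:ℝ) ≤ q * t := by positivity
  have hΦqt : (0:ℝ) < ∏' j : ℕ, (1 - (q * t) * q ^ j) := tprod_one_sub_pos hq0 hq1 hqt0 hqt
  have hstep : ∀ i : ℕ, Dterm q t i =
      (t ^ (-(1:ℝ)/2) * (∏' j : ℕ, (1 - (q * t) * q ^ j))⁻¹) *
        (qc q (q * t) i * (t⁻¹) ^ i) := by
    intro i
    have hz0 : (0:ℝ) ≤ q ^ (i+1) * t := by positivity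
    have hz1 : q ^ (i+1) * t < 1 := by
      have h1 : q ^ (i+1) * t = q ^ i * (q * t) := by ring
      nlinarith [pow_le_one₀ hq0.le hq1.le (n := i), pow_nonneg hq0.le i, mul_pos hq0 ht0]
    have hF := Fqb0_eq hq0 hq1 hz0 hz1
    have hshift := tprod_one_sub_shift hq0 hq1 hqt0 hqt i
    have hsc : q * t * q ^ i = q ^ (i+1) * t := by ring
    rw [hsc] at hshift
    have hPfin : (0:ℝ) < ∏ j ∈ Finset.range i, (1 - (q * t) * q ^ j) := by
      refine Finset.prod_pos fun j _ => ?_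
      have h2 : (q * t) * q ^ j ≤ (q * t) * 1 :=
        mul_le_mul_of_nonneg_left (pow_le_one₀ hq0.le hq1.le) hqt0
      linarith
    have hinv : (∏' j : ℕ, (1 - (q ^ (i+1) * t) * q ^ j))⁻¹ =
        (∏ j ∈ Finset.range i, (1 - (q * t) * q ^ j)) *
          (∏' j : ℕ, (1 - (q * t) * q ^ j))⁻¹ := by
      rw [hshift, mul_inv, ← mul_assoc, mul_inv_cancel₀ hPfin.ne', one_mul]
    rw [Dterm, hF, hinv, qc_eq_prod_mul_Pk]
    ring
  rw [tsum_congr hstep, tsum_mul_left, Fqb]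

lemma Fqb_qt_eval :
    Fqb q (q * t) t⁻¹ * ∏' j : ℕ, (1 - t⁻¹ * q ^ j) = ∏' j : ℕ, (1 - q * q ^ j) := by
  have ht0 := ht0' hq0 hq1 ht1 ht2
  have hqt := hqt' hq0 hq1 ht1 ht2
  have hqt0 : (0:ℝ) ≤ q * t := by positivity
  have hti0 : (0:ℝ) ≤ t⁻¹ := by positivity
  have hti1 : t⁻¹ < 1 := inv_lt_one_of_one_lt₀ ht1
  have h := qbinom hq0 hq1 hqt0 hqt hti0 hti1
  have hsc : q * t * t⁻¹ = q := by field_simp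
  rw [hsc] at h
  exact h

lemma split_ti :
    (∏' j : ℕ, (1 - t⁻¹ * q ^ j)) = (1 - t⁻¹) * ∏' j : ℕ, (1 - (q * t⁻¹) * q ^ j) := by
  have ht0 := ht0' hq0 hq1 ht1 ht2
  have hti0 : (0:ℝ) ≤ t⁻¹ := by positivity
  have hti1 : t⁻¹ < 1 := inv_lt_one_of_one_lt₀ ht1
  have h := tprod_one_sub_shift hq0 hq1 hti0 hti1 1
  have hsc : t⁻¹ * q ^ 1 = q * t⁻¹ := by ring
  rw [hsc] at h
  rw [h, Finset.prod_range_one, pow_zero, mul_one]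

end WithHyp2
end Final2


/-- Bloch–Okounkov one-point function. -/
theorem stmt_11 (q t : ℝ) (hq0 : 0 < q) (hq1 : q < 1) (ht1 : 1 < t) (ht2 : t < 1 / q) :
    (∀ lam : IntPartition,
      Summable fun i : ℕ => t ^ ((lam.parts i : ℝ) - (i : ℝ) - 1 / 2)) ∧
    Summable (fun lam : IntPartition =>
      q ^ lam.wt * ∑' i : ℕ, t ^ ((lam.parts i : ℝ) - (i : ℝ) - 1 / 2)) ∧
    Multipliable (fun m : ℕ => 1 - q ^ (m + 1)) ∧
    Multipliable (fun m : ℕ => (1 - q ^ (m + 1) * t) * (1 - q ^ (m + 1) * t⁻¹)) ∧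
    (∏' m : ℕ, (1 - q ^ (m + 1))) *
        ∑' lam : IntPartition,
          q ^ lam.wt * ∑' i : ℕ, t ^ ((lam.parts i : ℝ) - (i : ℝ) - 1 / 2) =
      1 / (((∏' m : ℕ, (1 - q ^ (m + 1))) ^ 2)⁻¹ *
        (t ^ ((1 : ℝ) / 2) - t ^ (-(1 : ℝ) / 2)) *
        ∏' m : ℕ, ((1 - q ^ (m + 1) * t) * (1 - q ^ (m + 1) * t⁻¹))) := by
  have ht0 := ht0' hq0 hq1 ht1 ht2
  have hqt := hqt' hq0 hq1 ht1 ht2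
  have hqt0 : (0:ℝ) ≤ q * t := by positivity
  have hti0 : (0:ℝ) ≤ t⁻¹ := by positivity
  have hti1 : t⁻¹ < 1 := inv_lt_one_of_one_lt₀ ht1
  have hti : (0:ℝ) < 1 - t⁻¹ := by linarith
  have hqti0 : (0:ℝ) ≤ q * t⁻¹ := by positivity
  have hqti1 : q * t⁻¹ < 1 := by nlinarith
  have hconv1 : (fun m : ℕ => 1 - q ^ (m + 1)) = (fun m : ℕ => 1 - q * q ^ m) := by
    funext m; rw [pow_succ']
  have hconv2 : (fun m : ℕ => (1 - q ^ (m + 1) * t) * (1 - q ^ (m + 1) * t⁻¹)) =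
      (fun m : ℕ => (1 - (q * t) * q ^ m) * (1 - (q * t⁻¹) * q ^ m)) := by
    funext m; rw [pow_succ']; ring
  refine ⟨summable_inner hq0 hq1 ht1 ht2, summable_outer hq0 hq1 ht1 ht2, ?_, ?_, ?_⟩
  · rw [hconv1]; exact multipliable_one_sub hq0 hq1 hq0.le hq1
  · rw [hconv2]
    exact (multipliable_one_sub hq0 hq1 hqt0 hqt).mul
      (multipliable_one_sub hq0 hq1 hqti0 hqti1)
  · rw [hconv1, hconv2, tsum_eq_tsum_D hq0 hq1 ht1 ht2, tsum_D_eval hq0 hq1 ht1 ht2]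
    have htm : (∏' m : ℕ, ((1 - (q * t) * q ^ m) * (1 - (q * t⁻¹) * q ^ m))) =
        (∏' m : ℕ, (1 - (q * t) * q ^ m)) * ∏' m : ℕ, (1 - (q * t⁻¹) * q ^ m) :=
      Multipliable.tprod_mul (multipliable_one_sub hq0 hq1 hqt0 hqt)
        (multipliable_one_sub hq0 hq1 hqti0 hqti1)
    rw [htm]
    have hΦq : (0:ℝ) < ∏' m : ℕ, (1 - q * q ^ m) := tprod_one_sub_pos hq0 hq1 hq0.le hq1
    have hΦqt : (0:ℝ) < ∏' m : ℕ, (1 - (q * t) * q ^ m) :=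
      tprod_one_sub_pos hq0 hq1 hqt0 hqt
    have hΦqti : (0:ℝ) < ∏' m : ℕ, (1 - (q * t⁻¹) * q ^ m) :=
      tprod_one_sub_pos hq0 hq1 hqti0 hqti1
    have hΦti : (0:ℝ) < ∏' m : ℕ, (1 - t⁻¹ * q ^ m) := tprod_one_sub_pos hq0 hq1 hti0 hti1
    -- Fqb q (q*t) t⁻¹ = Φq / ((1 - t⁻¹) Φqti)
    have hFqt : Fqb q (q * t) t⁻¹ =
        (∏' m : ℕ, (1 - q * q ^ m)) * ((1 - t⁻¹) * ∏' m : ℕ, (1 - (q * t⁻¹) * q ^ m))⁻¹ := by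
      have h1 := Fqb_qt_eval hq0 hq1 ht1 ht2
      have h2 := split_ti hq0 hq1 ht1 ht2
      rw [h2] at h1
      have hne : ((1 - t⁻¹) * ∏' m : ℕ, (1 - (q * t⁻¹) * q ^ m)) ≠ 0 := by positivity
      rw [eq_mul_inv_iff_mul_eq₀ hne]
      exact h1
    rw [hFqt]
    have hs : (0:ℝ) < t ^ (-(1:ℝ)/2) := Real.rpow_pos_of_pos ht0 _
    have key : t ^ (-(1:ℝ)/2) * (t ^ ((1:ℝ)/2) - t ^ (-(1:ℝ)/2)) = 1 - t⁻¹ := by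
      rw [mul_sub, ← Real.rpow_add ht0, ← Real.rpow_add ht0,
        show (-(1:ℝ)/2 + (1:ℝ)/2) = 0 by ring, show (-(1:ℝ)/2 + -(1:ℝ)/2) = -1 by ring,
        Real.rpow_zero, Real.rpow_neg_one]
    have hX : (0:ℝ) < t ^ ((1:ℝ)/2) - t ^ (-(1:ℝ)/2) := by
      rcases le_or_gt (t ^ ((1:ℝ)/2) - t ^ (-(1:ℝ)/2)) 0 with h | h
      · exfalso
        nlinarith [mul_nonneg hs.le (neg_nonneg.mpr h)]
      · exact h
    set X := t ^ ((1:ℝ)/2) - t ^ (-(1:ℝ)/2) with hXdef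
    set s := t ^ (-(1:ℝ)/2) with hsdef
    set A := ∏' m : ℕ, (1 - q * q ^ m) with hAdef
    set B := ∏' m : ℕ, (1 - (q * t) * q ^ m) with hBdef
    set C := ∏' m : ℕ, (1 - (q * t⁻¹) * q ^ m) with hCdef
    rw [← key]
    field_simp [hΦq.ne', hΦqt.ne', hΦqti.ne', hX.ne', hs.ne']
end
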